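/- arXiv:2401.13144 — 2 statements merged into one kernel-verified Lean document; each statement's English description precedes it below -/
import Mathlib

section
/- Let Q : ℝ₊^{m+1} → ℝ be measurable and homogeneous of degree −m, and let p₁,…,pₘ ∈ [1,∞) with Θ_m(p₁,…,pₘ) < ∞, and set 1/p = ∑_{j=1}^m 1/pⱼ with p ≥ 1. Then for all fⱼ ∈ L^{pⱼ}(ℝ₊), the multilinear operator M(f₁,…,fₘ)(x) = ∫_{ℝ₊^m} Q(x,x₁,…,xₘ) f₁(x₁)⋯fₘ(xₘ) dx₁⋯dxₘ is well-defined a.e. and satisfies ‖M(f₁,…,fₘ)‖_{L^p(ℝ₊)} ≤ Θ_m(p₁,…,pₘ) · ∏_{j=1}^m ‖fⱼ‖_{L^{pⱼ}(ℝ₊)}. -/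
open MeasureTheory ENNReal Set

/-- Lebesgue measure restricted to `(0,∞)`. -/
noncomputable def muHalf : Measure ℝ := (volume : Measure ℝ).restrict (Ioi 0)

/-- The product measure on `ℝ₊^m`. -/
noncomputable def piHalf (m : ℕ) : Measure (Fin m → ℝ) :=
  Measure.pi fun _ => muHalf

/-- `Θ_m(p⃗) = ∫_{ℝ₊^m} |Q(1,x⃗)| ∏ xⱼ^{-1/pⱼ} dx⃗`. -/
noncomputable def Theta (m : ℕ) (Q : ℝ → (Fin m → ℝ) → ℝ) (p : Fin m → ℝ) : ℝ≥0∞ :=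
  ∫⁻ xs, ENNReal.ofReal (|Q 1 xs| * ∏ j, (xs j) ^ (-(1 / p j))) ∂(piHalf m)

instance : SigmaFinite muHalf := by unfold muHalf; infer_instance
instance (m : ℕ) : SigmaFinite (piHalf m) := by unfold piHalf; infer_instance

lemma map_scale (c : ℝ) (hc : 0 < c) :
    Measure.map (fun t => c * t) muHalf = ENNReal.ofReal c⁻¹ • muHalf := by
  unfold muHalf
  have hpre : (fun t => c * t) ⁻¹' (Ioi 0) = Ioi 0 := by
    ext t; simp [mul_pos_iff, hc, not_lt.2 hc.le]
  rw [← hpre, ← Measure.restrict_map (measurable_const_mul c) measurableSet_Ioi,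
    Real.map_volume_mul_left hc.ne', Measure.restrict_smul, abs_of_pos (inv_pos.2 hc), hpre]

lemma lint_scale (c : ℝ) (hc : 0 < c) {g : ℝ → ℝ≥0∞} (hg : Measurable g) :
    ∫⁻ t, g (c * t) ∂muHalf = ENNReal.ofReal c⁻¹ * ∫⁻ t, g t ∂muHalf := by
  rw [← lintegral_map hg (measurable_const_mul c), map_scale c hc, lintegral_smul_measure, smul_eq_mul]

lemma lint_scale' (c : ℝ) (hc : 0 < c) {g : ℝ → ℝ≥0∞} (hg : Measurable g) :
    ∫⁻ t, g (t * c) ∂muHalf = ENNReal.ofReal c⁻¹ * ∫⁻ t, g t ∂muHalf := by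
  rw [← lint_scale c hc hg]
  exact lintegral_congr fun t => by rw [mul_comm]

lemma map_scale_pi (m : ℕ) (c : ℝ) (hc : 0 < c) :
    Measure.map (fun y : Fin m → ℝ => fun j => c * y j) (piHalf m)
      = (ENNReal.ofReal c⁻¹) ^ m • piHalf m := by
  have hT : Measurable (fun y : Fin m → ℝ => fun j => c * y j) :=
    measurable_pi_lambda _ fun j => (measurable_const_mul c).comp (measurable_pi_apply j)
  have h1 : ENNReal.ofReal c * ENNReal.ofReal c⁻¹ = 1 := by
    rw [← ENNReal.ofReal_mul hc.le, mul_inv_cancel₀ hc.ne', ENNReal.ofReal_one]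
  have key : Measure.pi (fun _ : Fin m => muHalf)
      = (ENNReal.ofReal c) ^ m • Measure.map (fun y : Fin m → ℝ => fun j => c * y j) (piHalf m) := by
    refine Measure.pi_eq fun s hs => ?_
    rw [Measure.smul_apply, Measure.map_apply hT (MeasurableSet.univ_pi hs)]
    have hpre : (fun y : Fin m → ℝ => fun j => c * y j) ⁻¹' (univ.pi s)
        = univ.pi (fun j => (fun t => c * t) ⁻¹' s j) := by
      ext y; simp [Set.mem_pi]
    rw [hpre]
    unfold piHalf
    rw [Measure.pi_pi]
    have : ∀ j, muHalf ((fun t => c * t) ⁻¹' s j) = ENNReal.ofReal c⁻¹ * muHalf (s j) := by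
      intro j
      rw [← Measure.map_apply (measurable_const_mul c) (hs j), map_scale c hc]; rfl
    simp_rw [this]
    rw [Finset.prod_mul_distrib, Finset.prod_const, Finset.card_univ, Fintype.card_fin,
      smul_eq_mul, ← mul_assoc, ← mul_pow, h1, one_pow, one_mul]
  have h1' : ENNReal.ofReal c⁻¹ * ENNReal.ofReal c = 1 := by rw [mul_comm]; exact h1
  conv_rhs => rw [show (piHalf m) = Measure.pi (fun _ : Fin m => muHalf) from rfl, key]
  rw [smul_smul, ← mul_pow, h1', one_pow, one_smul]

lemma lint_scale_pi (m : ℕ) (c : ℝ) (hc : 0 < c) {g : (Fin m → ℝ) → ℝ≥0∞} (hg : Measurable g) :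
    ∫⁻ y, g (fun j => c * y j) ∂(piHalf m)
      = (ENNReal.ofReal c⁻¹) ^ m * ∫⁻ y, g y ∂(piHalf m) := by
  have hT : Measurable (fun y : Fin m → ℝ => fun j => c * y j) :=
    measurable_pi_lambda _ fun j => (measurable_const_mul c).comp (measurable_pi_apply j)
  rw [← lintegral_map hg hT, map_scale_pi m c hc, lintegral_smul_measure, smul_eq_mul]

lemma ae_pos_pi (m : ℕ) : ∀ᵐ y ∂(piHalf m), ∀ j, 0 < y j := by
  rw [ae_all_iff]
  intro j
  have h0 : muHalf ((Ioi (0:ℝ))ᶜ) = 0 := by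
    unfold muHalf
    rw [Measure.restrict_apply (measurableSet_Ioi.compl), compl_Ioi]
    simp [Set.Iic_inter_Ioi]
  have h2 := Measure.pi_eval_preimage_null (fun _ : Fin m => muHalf) (i := j) h0
  unfold piHalf
  rw [ae_iff]
  have hset : {y : Fin m → ℝ | ¬ 0 < y j} = Function.eval j ⁻¹' (Ioi (0:ℝ))ᶜ := by
    ext y; simp [Function.eval]
  rw [hset]
  exact h2

lemma ae_pos_mu : ∀ᵐ x ∂muHalf, 0 < x := by
  unfold muHalf
  exact ae_restrict_mem measurableSet_Ioi

-- prod of rpow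
lemma prod_rpow' {ι : Type*} (s : Finset ι) (g : ι → ℝ≥0∞) {e : ℝ} (he : 0 ≤ e) :
    (∏ i ∈ s, g i) ^ e = ∏ i ∈ s, (g i) ^ e := by
  induction s using Finset.cons_induction with
  | empty => simp [ENNReal.one_rpow]
  | cons i s hi ih => rw [Finset.prod_cons, Finset.prod_cons, ENNReal.mul_rpow_of_nonneg _ _ he, ih]

lemma rpow_sum' {ι : Type*} {a : ℝ≥0∞} (ha : a ≠ ∞) (s : Finset ι) (hs : s.Nonempty)
    {c : ι → ℝ} (hc : ∀ i ∈ s, 0 < c i) :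
    a ^ (∑ i ∈ s, c i) = ∏ i ∈ s, a ^ c i := by
  rcases eq_or_ne a 0 with rfl | ha0
  · rw [ENNReal.zero_rpow_of_pos (Finset.sum_pos hc hs)]
    obtain ⟨i, hi⟩ := hs
    exact (Finset.prod_eq_zero hi (ENNReal.zero_rpow_of_pos (hc i hi))).symm
  · clear hs
    induction s using Finset.cons_induction with
    | empty => simp
    | cons i s hi ih =>
      rw [Finset.sum_cons, Finset.prod_cons, ENNReal.rpow_add _ _ ha0 ha,
        ih (fun i hi' => hc i (Finset.mem_cons_of_mem hi'))]

lemma rpow_sub_one_mul {a : ℝ≥0∞} (ha : a ≠ ∞) {q : ℝ} (hq : 0 < q) :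
    a ^ (q - 1) * a = a ^ q := by
  rcases eq_or_ne a 0 with rfl | ha0
  · rw [mul_zero, ENNReal.zero_rpow_of_pos hq]
  · calc a ^ (q - 1) * a = a ^ (q - 1) * a ^ (1:ℝ) := by rw [ENNReal.rpow_one]
      _ = a ^ q := by rw [← ENNReal.rpow_add _ _ ha0 ha]; norm_num

lemma split_eq (m : ℕ) (hm : m ≠ 0) (p : Fin m → ℝ) (hp : ∀ j, 1 ≤ p j) (q : ℝ) (hq : 1 ≤ q)
    (hqp : 1/q = ∑ j, 1/p j)
    (K : ℝ≥0∞) (hK : K ≠ ∞) (Y : Fin m → ℝ≥0∞) (hY0 : ∀ j, Y j ≠ 0) (hYt : ∀ j, Y j ≠ ∞)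
    (F : Fin m → ℝ≥0∞) (hFt : ∀ j, F j ≠ ∞) :
    K * ∏ j, F j
      = (K * ∏ j, (Y j) ^ (-(1/p j))) ^ (1 - 1/q)
        * ∏ j, ((K * (∏ k, (Y k) ^ (-(1/p k))) * Y j) * (F j) ^ (p j)) ^ (1/p j) := by
  have hp0 : ∀ j, 0 < p j := fun j => lt_of_lt_of_le one_pos (hp j)
  have hpinv : ∀ j, 0 < 1 / p j := fun j => one_div_pos.mpr (hp0 j)
  set W : ℝ≥0∞ := ∏ j, (Y j) ^ (-(1/p j)) with hWdef
  have hW0 : W ≠ 0 := by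
    rw [hWdef, Finset.prod_ne_zero_iff]
    intro j _
    simp [ENNReal.rpow_eq_zero_iff, hY0 j, hYt j]
  have hWt : W ≠ ∞ := by
    refine (ENNReal.prod_lt_top fun j _ => ?_).ne
    simp [lt_top_iff_ne_top, ENNReal.rpow_eq_top_iff, hY0 j, hYt j]
  have j0 : Fin m := ⟨0, Nat.pos_of_ne_zero hm⟩
  rcases eq_or_ne K 0 with rfl | hK0
  · have hz : ∀ j : Fin m, ((0 * W * Y j) * (F j) ^ (p j)) ^ (1/p j) = 0 := by
      intro j
      rw [zero_mul, zero_mul, zero_mul, ENNReal.zero_rpow_of_pos (hpinv j)]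
    rw [zero_mul, Finset.prod_eq_zero (Finset.mem_univ j0) (hz j0), mul_zero]
  rcases Classical.em (∃ j, F j = 0) with ⟨j, hj⟩ | hF0
  · have hz : ((K * W * Y j) * (F j) ^ (p j)) ^ (1/p j) = 0 := by
      rw [hj, ENNReal.zero_rpow_of_pos (hp0 j), mul_zero, ENNReal.zero_rpow_of_pos (hpinv j)]
    rw [Finset.prod_eq_zero (Finset.mem_univ j) hj, mul_zero,
      Finset.prod_eq_zero (Finset.mem_univ j) hz, mul_zero]
  push_neg at hF0
  have hKW0 : K * W ≠ 0 := mul_ne_zero hK0 hW0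
  have hKWt : K * W ≠ ∞ := ENNReal.mul_ne_top hK hWt
  have hfac : ∀ j : Fin m, ((K * W * Y j) * (F j) ^ (p j)) ^ (1/p j)
      = (K * W) ^ (1/p j) * ((Y j) ^ (1/p j) * F j) := by
    intro j
    rw [ENNReal.mul_rpow_of_nonneg _ _ (hpinv j).le, ENNReal.mul_rpow_of_nonneg _ _ (hpinv j).le,
      ← ENNReal.rpow_mul, mul_one_div, div_self (hp0 j).ne', ENNReal.rpow_one, mul_assoc]
  rw [Finset.prod_congr rfl (fun j _ => hfac j), Finset.prod_mul_distrib,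
    ← rpow_sum' hKWt Finset.univ ⟨j0, Finset.mem_univ j0⟩ (fun j _ => hpinv j), ← hqp,
    ← mul_assoc, ← ENNReal.rpow_add _ _ hKW0 hKWt]
  have h1 : (1 - 1/q) + 1/q = 1 := by ring
  rw [h1, ENNReal.rpow_one, Finset.prod_mul_distrib]
  have h2 : W * ∏ j, (Y j) ^ (1/p j) = 1 := by
    rw [hWdef, ← Finset.prod_mul_distrib]
    rw [Finset.prod_congr rfl (fun j _ => ?_)]
    · exact Finset.prod_const_one
    · rw [← ENNReal.rpow_add _ _ (hY0 j) (hYt j), neg_add_cancel, ENNReal.rpow_zero]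
  calc K * ∏ j, F j = (K * W * ∏ j, (Y j) ^ (1/p j)) * ∏ j, F j := by
        rw [mul_assoc K W, h2, mul_one]
    _ = K * W * ((∏ j, (Y j) ^ (1/p j)) * ∏ j, F j) := by ring

set_option maxHeartbeats 1000000 in
theorem key (m : ℕ) (hm : m ≠ 0) (Q : ℝ → (Fin m → ℝ) → ℝ)
    (hQmeas : Measurable (fun z : ℝ × (Fin m → ℝ) => Q z.1 z.2))
    (hhom : ∀ δ > (0:ℝ), ∀ x > (0:ℝ), ∀ xs : Fin m → ℝ, (∀ j, 0 < xs j) →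
      Q (δ * x) (fun j => δ * xs j) = δ ^ (-(m:ℝ)) * Q x xs)
    (p : Fin m → ℝ) (hp : ∀ j, 1 ≤ p j)
    (hTheta : Theta m Q p < ∞)
    (q : ℝ) (hq : 1 ≤ q) (hqp : 1 / q = ∑ j, 1 / p j)
    (f : Fin m → ℝ → ℝ) (hfm : ∀ j, Measurable (f j))
    (hf : ∀ j, MemLp (f j) (ENNReal.ofReal (p j)) muHalf) :
    (∀ᵐ x ∂muHalf, Integrable (fun xs => Q x xs * ∏ j, f j (xs j)) (piHalf m)) ∧
    eLpNorm (fun x => ∫ xs, Q x xs * ∏ j, f j (xs j) ∂(piHalf m))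
        (ENNReal.ofReal q) muHalf
      ≤ Theta m Q p * ∏ j, eLpNorm (f j) (ENNReal.ofReal (p j)) muHalf := by
  have hp0 : ∀ j, 0 < p j := fun j => lt_of_lt_of_le one_pos (hp j)
  have hq0 : 0 < q := lt_of_lt_of_le one_pos hq
  have j0 : Fin m := ⟨0, Nat.pos_of_ne_zero hm⟩
  have huniv : (Finset.univ : Finset (Fin m)).Nonempty := ⟨j0, Finset.mem_univ j0⟩
  -- abbreviations
  set K : (Fin m → ℝ) → ℝ≥0∞ := fun y => (‖Q 1 y‖₊ : ℝ≥0∞) with hK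
  set W : (Fin m → ℝ) → ℝ≥0∞ := fun y => ∏ j, (ENNReal.ofReal (y j)) ^ (-(1/p j)) with hW
  set F : Fin m → ℝ → ℝ≥0∞ := fun j t => (‖f j t‖₊ : ℝ≥0∞) with hF
  set S : Fin m → ℝ≥0∞ := fun j => ∫⁻ t, F j t ^ p j ∂muHalf with hS
  set B : Fin m → ℝ → ℝ≥0∞ := fun j x =>
    ∫⁻ y, (K y * W y * ENNReal.ofReal (y j)) * F j (x * y j) ^ p j ∂(piHalf m) with hB
  set Φ : ℝ → ℝ≥0∞ := fun x => ∫⁻ y, K y * ∏ j, F j (x * y j) ∂(piHalf m) with hPhi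
  set I : ℝ → ℝ≥0∞ := fun x =>
    ∫⁻ xs, (‖Q x xs‖₊ : ℝ≥0∞) * ∏ j, F j (xs j) ∂(piHalf m) with hI
  -- measurability
  have hKmeas : Measurable K :=
    (hQmeas.comp measurable_prodMk_left).nnnorm.coe_nnreal_ennreal
  have hWmeas : Measurable W :=
    Finset.measurable_prod _ fun j _ => ((measurable_pi_apply j).ennreal_ofReal).pow_const _
  have hFmeas : ∀ j, Measurable (F j) := fun j => (hfm j).nnnorm.coe_nnreal_ennreal
  have hHmeas : ∀ j : Fin m, Measurable (fun z : ℝ × (Fin m → ℝ) =>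
      (K z.2 * W z.2 * ENNReal.ofReal (z.2 j)) * F j (z.1 * z.2 j) ^ p j) := by
    intro j
    have h1 : Measurable (fun z : ℝ × (Fin m → ℝ) => z.1 * z.2 j) :=
      measurable_fst.mul ((measurable_pi_apply j).comp measurable_snd)
    exact (((hKmeas.comp measurable_snd).mul (hWmeas.comp measurable_snd)).mul
      (((measurable_pi_apply j).comp measurable_snd).ennreal_ofReal)).mul
      (((hFmeas j).comp h1).pow_const _)
  -- Theta as lintegral of K * W
  have hThetaEq : Theta m Q p = ∫⁻ y, K y * W y ∂(piHalf m) := by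
    unfold Theta
    refine lintegral_congr_ae ?_
    filter_upwards [ae_pos_pi m] with y hy
    rw [ENNReal.ofReal_mul (abs_nonneg _), ← Real.enorm_eq_ofReal_abs,
      ENNReal.ofReal_prod_of_nonneg (fun j _ => Real.rpow_nonneg (hy j).le _)]
    congr 1
    exact Finset.prod_congr rfl fun j _ => (ENNReal.ofReal_rpow_of_pos (hy j)).symm
  -- finiteness of S and link to eLpNorm
  have hSnorm : ∀ j, (S j) ^ (1/p j) = eLpNorm (f j) (ENNReal.ofReal (p j)) muHalf := by
    intro j
    rw [eLpNorm_eq_lintegral_rpow_enorm_toReal (by simp [ENNReal.ofReal_eq_zero]; linarith [hp j])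
      ENNReal.ofReal_ne_top, ENNReal.toReal_ofReal (hp0 j).le]
    rfl
  have hSfin : ∀ j, S j ≠ ∞ := by
    intro j
    have h2 : (S j) ^ (1/p j) < ∞ := by rw [hSnorm j]; exact (hf j).2
    by_contra h
    rw [h, ENNReal.top_rpow_of_pos (one_div_pos.mpr (hp0 j))] at h2
    exact (lt_irrefl _ h2)
  have hWfin : ∀ y : Fin m → ℝ, (∀ j, 0 < y j) → W y ≠ 0 ∧ W y ≠ ∞ := by
    intro y hy
    constructor
    · rw [hW]
      dsimp only
      rw [Finset.prod_ne_zero_iff]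
      intro j _
      simp [ENNReal.rpow_eq_zero_iff, ENNReal.ofReal_eq_zero, not_le.mpr (hy j)]
    · rw [hW]
      dsimp only
      refine (ENNReal.prod_lt_top fun j _ => ?_).ne
      simp [lt_top_iff_ne_top, ENNReal.rpow_eq_top_iff, ENNReal.ofReal_eq_zero,
        not_le.mpr (hy j)]
  have hsum : ∑ j, q / p j = 1 := by
    have h0 : ∀ j : Fin m, q / p j = q * (1 / p j) := fun j => by ring
    rw [Finset.sum_congr rfl fun j _ => h0 j, ← Finset.mul_sum, ← hqp, mul_one_div,
      div_self hq0.ne']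
  -- evaluation of ∫ B j
  have hBint : ∀ j, ∫⁻ x, B j x ∂muHalf = Theta m Q p * S j := by
    intro j
    have hswap : ∫⁻ x, B j x ∂muHalf
        = ∫⁻ y, ∫⁻ x, (K y * W y * ENNReal.ofReal (y j)) * F j (x * y j) ^ p j ∂muHalf
            ∂(piHalf m) := by
      simp only [hB]
      exact lintegral_lintegral_swap ((hHmeas j).aemeasurable)
    rw [hswap]
    have hinner : ∀ᵐ y ∂(piHalf m),
        (∫⁻ x, (K y * W y * ENNReal.ofReal (y j)) * F j (x * y j) ^ p j ∂muHalf)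
          = (K y * W y) * S j := by
      filter_upwards [ae_pos_pi m] with y hy
      have hyj := hy j
      have hc : K y * W y * ENNReal.ofReal (y j) ≠ ∞ :=
        ENNReal.mul_ne_top (ENNReal.mul_ne_top ENNReal.coe_ne_top (hWfin y hy).2)
          ENNReal.ofReal_ne_top
      rw [lintegral_const_mul' _ _ hc,
        lint_scale' (y j) hyj ((hFmeas j).pow_const _), hS]
      dsimp only
      rw [ENNReal.ofReal_inv_of_pos hyj, mul_assoc (K y * W y), ← mul_assoc
        (ENNReal.ofReal (y j)),
        ENNReal.mul_inv_cancel (by simp [ENNReal.ofReal_eq_zero, not_le.mpr hyj])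
          ENNReal.ofReal_ne_top, one_mul]
    rw [lintegral_congr_ae hinner, lintegral_mul_const' _ _ (hSfin j), ← hThetaEq]
  -- pointwise Hölder bound on Φ
  have hB_le : ∀ x : ℝ, Φ x ≤ (Theta m Q p) ^ (1 - 1/q) * ∏ j, (B j x) ^ (1/p j) := by
    intro x
    have hsplit : (fun y => K y * ∏ j, F j (x * y j)) =ᵐ[piHalf m]
        (fun y => (K y * W y) ^ (1 - 1/q) *
          ∏ j, ((K y * W y * ENNReal.ofReal (y j)) * (F j (x * y j)) ^ (p j)) ^ (1/p j)) := by
      filter_upwards [ae_pos_pi m] with y hy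
      have h := split_eq m hm p hp q hq hqp (K y) ENNReal.coe_ne_top
        (fun j => ENNReal.ofReal (y j))
        (fun j => by simp [ENNReal.ofReal_eq_zero, not_le.mpr (hy j)])
        (fun j => ENNReal.ofReal_ne_top)
        (fun j => F j (x * y j)) (fun j => ENNReal.coe_ne_top)
      rw [hW]
      exact h
    set G : Fin (m+1) → (Fin m → ℝ) → ℝ≥0∞ := Fin.cons (fun y => K y * W y)
      (fun j y => (K y * W y * ENNReal.ofReal (y j)) * (F j (x * y j)) ^ (p j)) with hG
    set e : Fin (m+1) → ℝ := Fin.cons (1 - 1/q) (fun j => 1/p j) with he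
    have h1 : ∀ y, (K y * W y) ^ (1 - 1/q)
        * ∏ j, ((K y * W y * ENNReal.ofReal (y j)) * (F j (x * y j)) ^ (p j)) ^ (1/p j)
        = ∏ i, (G i y) ^ (e i) := by
      intro y
      rw [Fin.prod_univ_succ]
      simp only [hG, he, Fin.cons_zero, Fin.cons_succ]
    have h2 : ∑ i, e i = 1 := by
      rw [Fin.sum_univ_succ]
      simp only [he, Fin.cons_zero, Fin.cons_succ]
      rw [← hqp]
      ring
    have h3 : ∀ i ∈ Finset.univ, 0 ≤ e i := by
      intro i _
      induction i using Fin.cases with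
      | zero =>
        simp only [he, Fin.cons_zero]
        have : 1/q ≤ 1 := by
          rw [div_le_one hq0]; exact hq
        linarith
      | succ j =>
        simp only [he, Fin.cons_succ]
        exact one_div_nonneg.mpr (hp0 j).le
    have h4 : ∀ i ∈ Finset.univ, AEMeasurable (G i) (piHalf m) := by
      intro i _
      induction i using Fin.cases with
      | zero =>
        simp only [hG, Fin.cons_zero]
        exact (hKmeas.mul hWmeas).aemeasurable
      | succ j =>
        simp only [hG, Fin.cons_succ]
        exact (((hKmeas.mul hWmeas).mul ((measurable_pi_apply j).ennreal_ofReal)).mul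
          (((hFmeas j).comp ((measurable_const_mul x).comp (measurable_pi_apply j))).pow_const _)).aemeasurable
    calc Φ x = ∫⁻ y, (K y * W y) ^ (1 - 1/q) *
          ∏ j, ((K y * W y * ENNReal.ofReal (y j)) * (F j (x * y j)) ^ (p j)) ^ (1/p j)
            ∂(piHalf m) := lintegral_congr_ae hsplit
      _ = ∫⁻ y, ∏ i, (G i y) ^ (e i) ∂(piHalf m) := lintegral_congr fun y => h1 y
      _ ≤ ∏ i, (∫⁻ y, G i y ∂(piHalf m)) ^ (e i) :=
          ENNReal.lintegral_prod_norm_pow_le _ h4 h2 h3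
      _ = (Theta m Q p) ^ (1 - 1/q) * ∏ j, (B j x) ^ (1/p j) := by
          rw [Fin.prod_univ_succ]
          simp only [hG, he, Fin.cons_zero, Fin.cons_succ]
          rw [← hThetaEq, hB]
  -- main estimate
  have hT : ∫⁻ x, Φ x ^ q ∂muHalf ≤ (Theta m Q p) ^ q * ∏ j, (S j) ^ (q / p j) := by
    have hBmeas : ∀ j, Measurable (B j) := by
      intro j
      rw [hB]
      exact Measurable.lintegral_prod_right' (f := fun z : ℝ × (Fin m → ℝ) =>
        (K z.2 * W z.2 * ENNReal.ofReal (z.2 j)) * F j (z.1 * z.2 j) ^ p j) (hHmeas j)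
    calc ∫⁻ x, Φ x ^ q ∂muHalf
        ≤ ∫⁻ x, ((Theta m Q p) ^ (1 - 1/q) * ∏ j, (B j x) ^ (1/p j)) ^ q ∂muHalf :=
          lintegral_mono fun x => ENNReal.rpow_le_rpow (hB_le x) hq0.le
      _ = ∫⁻ x, (Theta m Q p) ^ (q - 1) * ∏ j, (B j x) ^ (q / p j) ∂muHalf := by
          refine lintegral_congr fun x => ?_
          rw [ENNReal.mul_rpow_of_nonneg _ _ hq0.le, ← ENNReal.rpow_mul,
            prod_rpow' _ _ hq0.le]
          congr 1
          · congr 1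
            field_simp
          · refine Finset.prod_congr rfl fun j _ => ?_
            rw [← ENNReal.rpow_mul]
            congr 1
            ring
      _ = (Theta m Q p) ^ (q - 1) * ∫⁻ x, ∏ j, (B j x) ^ (q / p j) ∂muHalf :=
          lintegral_const_mul' _ _
            (ENNReal.rpow_ne_top_of_nonneg (by linarith) hTheta.ne)
      _ ≤ (Theta m Q p) ^ (q - 1) * ∏ j, (∫⁻ x, B j x ∂muHalf) ^ (q / p j) := by
          refine mul_le_mul_right ?_ _
          exact ENNReal.lintegral_prod_norm_pow_le _
            (fun j _ => (hBmeas j).aemeasurable) hsum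
            (fun j _ => div_nonneg hq0.le (hp0 j).le)
      _ = (Theta m Q p) ^ (q - 1) * ∏ j, ((Theta m Q p) * S j) ^ (q / p j) := by
          rw [Finset.prod_congr rfl fun j _ => by rw [hBint j]]
      _ = (Theta m Q p) ^ q * ∏ j, (S j) ^ (q / p j) := by
          rw [Finset.prod_congr rfl fun j _ =>
            ENNReal.mul_rpow_of_nonneg (Theta m Q p) (S j)
              (div_nonneg hq0.le (hp0 j).le),
            Finset.prod_mul_distrib,
            ← rpow_sum' hTheta.ne Finset.univ huniv (fun j _ => div_pos hq0 (hp0 j)),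
            hsum, ENNReal.rpow_one, ← mul_assoc, rpow_sub_one_mul hTheta.ne hq0]
  -- I = Φ on positives
  have hIΦ : ∀ x : ℝ, 0 < x → I x = Φ x := by
    intro x hx
    have hgmeas : Measurable (fun xs : Fin m → ℝ => (‖Q x xs‖₊ : ℝ≥0∞) * ∏ j, F j (xs j)) :=
      ((hQmeas.comp measurable_prodMk_left).nnnorm.coe_nnreal_ennreal).mul
        (Finset.measurable_prod _ fun j _ => (hFmeas j).comp (measurable_pi_apply j))
    have h1 : ∫⁻ y, (‖Q x (fun j => x * y j)‖₊ : ℝ≥0∞) * ∏ j, F j (x * y j) ∂(piHalf m)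
        = (ENNReal.ofReal x⁻¹) ^ m * I x := by
      rw [hI]
      exact lint_scale_pi m x hx hgmeas
    have h2 : ∫⁻ y, (‖Q x (fun j => x * y j)‖₊ : ℝ≥0∞) * ∏ j, F j (x * y j) ∂(piHalf m)
        = ENNReal.ofReal (x ^ (-(m:ℝ))) * Φ x := by
      rw [hPhi]
      dsimp only
      rw [← lintegral_const_mul' _ _ ENNReal.ofReal_ne_top]
      refine lintegral_congr_ae ?_
      filter_upwards [ae_pos_pi m] with y hy
      have hq2 : Q x (fun j => x * y j) = x ^ (-(m:ℝ)) * Q 1 y := by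
        have h := hhom x hx 1 one_pos y hy
        rwa [mul_one] at h
      rw [hq2, nnnorm_mul, ENNReal.coe_mul, ← mul_assoc, ← enorm_eq_nnnorm,
        Real.enorm_eq_ofReal (Real.rpow_pos_of_pos hx _).le]
    have hcoef : ENNReal.ofReal (x ^ (-(m:ℝ))) = (ENNReal.ofReal x⁻¹) ^ m := by
      rw [Real.rpow_neg hx.le, Real.rpow_natCast, ← inv_pow,
        ENNReal.ofReal_pow (inv_nonneg.2 hx.le)]
    have hne0 : (ENNReal.ofReal x⁻¹) ^ m ≠ 0 :=
      pow_ne_zero _ (by simp [ENNReal.ofReal_eq_zero, not_le.mpr (inv_pos.2 hx)])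
    have hnet : (ENNReal.ofReal x⁻¹) ^ m ≠ ∞ := ENNReal.pow_ne_top ENNReal.ofReal_ne_top
    have h3 := h1.symm.trans h2
    rw [hcoef] at h3
    exact (ENNReal.mul_right_inj hne0 hnet).mp h3
  have hae_eq : I =ᵐ[muHalf] Φ := by
    filter_upwards [ae_pos_mu] with x hx using hIΦ x hx
  have hInorm : ∀ x, ∫⁻ xs, (‖Q x xs * ∏ j, f j (xs j)‖₊ : ℝ≥0∞) ∂(piHalf m) = I x := by
    intro x
    refine lintegral_congr fun xs => ?_
    rw [nnnorm_mul, nnnorm_prod, ENNReal.coe_mul, ENNReal.coe_finset_prod]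
  have hImeas : Measurable I := by
    rw [hI]
    exact Measurable.lintegral_prod_right'
      (f := fun z : ℝ × (Fin m → ℝ) => (‖Q z.1 z.2‖₊ : ℝ≥0∞) * ∏ j, F j (z.2 j))
      ((hQmeas.nnnorm.coe_nnreal_ennreal).mul
        (Finset.measurable_prod _ fun j _ =>
          (hFmeas j).comp ((measurable_pi_apply j).comp measurable_snd)))
  have hRHSfin : (Theta m Q p) ^ q * ∏ j, (S j) ^ (q / p j) ≠ ∞ := by
    refine ENNReal.mul_ne_top (ENNReal.rpow_ne_top_of_nonneg hq0.le hTheta.ne) ?_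
    exact (ENNReal.prod_lt_top fun j _ => 
      (ENNReal.rpow_ne_top_of_nonneg (div_nonneg hq0.le (hp0 j).le) (hSfin j)).lt_top).ne
  have hIq : ∫⁻ x, I x ^ q ∂muHalf = ∫⁻ x, Φ x ^ q ∂muHalf :=
    lintegral_congr_ae (hae_eq.mono fun x h => by dsimp only; rw [h])
  have hTfin : ∫⁻ x, I x ^ q ∂muHalf ≠ ∞ := by
    rw [hIq]
    exact (lt_of_le_of_lt hT hRHSfin.lt_top).ne
  constructor
  · have hae := ae_lt_top (hImeas.pow_const q) hTfin
    filter_upwards [hae] with x hx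
    refine ⟨?_, ?_⟩
    · exact ((hQmeas.comp measurable_prodMk_left).mul
        (Finset.measurable_prod _ fun j _ =>
          (hfm j).comp (measurable_pi_apply j))).aestronglyMeasurable
    · show (∫⁻ xs, (‖Q x xs * ∏ j, f j (xs j)‖₊ : ℝ≥0∞) ∂(piHalf m)) < ∞
      rw [hInorm x]
      exact (ENNReal.rpow_lt_top_iff_of_pos hq0).mp hx
  · have hq0' : ENNReal.ofReal q ≠ 0 := by
      simp only [ne_eq, ENNReal.ofReal_eq_zero, not_le]
      linarith
    rw [eLpNorm_eq_lintegral_rpow_enorm_toReal hq0' ENNReal.ofReal_ne_top,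
      ENNReal.toReal_ofReal hq0.le]
    calc (∫⁻ x, (‖∫ xs, Q x xs * ∏ j, f j (xs j) ∂(piHalf m)‖₊ : ℝ≥0∞) ^ q ∂muHalf) ^ (1/q)
        ≤ (∫⁻ x, (I x) ^ q ∂muHalf) ^ (1/q) := by
          refine ENNReal.rpow_le_rpow
            (lintegral_mono fun x => ENNReal.rpow_le_rpow ?_ hq0.le) (by positivity)
          rw [← hInorm x]
          exact enorm_integral_le_lintegral_enorm _
      _ = (∫⁻ x, Φ x ^ q ∂muHalf) ^ (1/q) := by rw [hIq]
      _ ≤ ((Theta m Q p) ^ q * ∏ j, (S j) ^ (q / p j)) ^ (1/q) :=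
          ENNReal.rpow_le_rpow hT (by positivity)
      _ = Theta m Q p * ∏ j, eLpNorm (f j) (ENNReal.ofReal (p j)) muHalf := by
          rw [ENNReal.mul_rpow_of_nonneg _ _ (by positivity), ← ENNReal.rpow_mul,
            mul_one_div, div_self hq0.ne', ENNReal.rpow_one, prod_rpow' _ _ (by positivity)]
          congr 1
          refine Finset.prod_congr rfl fun j _ => ?_
          rw [← ENNReal.rpow_mul,
            show (q / p j) * (1/q) = 1 / p j by
              rw [div_mul_div_comm, mul_one, mul_comm (p j) q, ← div_div, div_self hq0.ne'],
            hSnorm j]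

/-- If `Q` is homogeneous of degree `-m` and `Θ_m(p⃗) < ∞`, then the multilinear operator
`M(f⃗)(x) = ∫_{ℝ₊^m} Q(x,x⃗) ∏ fⱼ(xⱼ) dx⃗` is well defined a.e. and
`‖M(f⃗)‖_{L^p} ≤ Θ_m(p⃗) ∏ ‖fⱼ‖_{L^{pⱼ}}` where `1/p = ∑ 1/pⱼ`. -/
theorem stmt2 (m : ℕ) (Q : ℝ → (Fin m → ℝ) → ℝ)
    (hQmeas : Measurable (fun z : ℝ × (Fin m → ℝ) => Q z.1 z.2))
    (hhom : ∀ δ > (0:ℝ), ∀ x > (0:ℝ), ∀ xs : Fin m → ℝ, (∀ j, 0 < xs j) →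
      Q (δ * x) (fun j => δ * xs j) = δ ^ (-(m:ℝ)) * Q x xs)
    (p : Fin m → ℝ) (hp : ∀ j, 1 ≤ p j)
    (hTheta : Theta m Q p < ∞)
    (q : ℝ) (hq : 1 ≤ q) (hqp : 1 / q = ∑ j, 1 / p j)
    (f : Fin m → ℝ → ℝ) (hf : ∀ j, MemLp (f j) (ENNReal.ofReal (p j)) muHalf) :
    (∀ᵐ x ∂muHalf, Integrable (fun xs => Q x xs * ∏ j, f j (xs j)) (piHalf m)) ∧
    eLpNorm (fun x => ∫ xs, Q x xs * ∏ j, f j (xs j) ∂(piHalf m))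
        (ENNReal.ofReal q) muHalf
      ≤ Theta m Q p * ∏ j, eLpNorm (f j) (ENNReal.ofReal (p j)) muHalf := by
  have hq0 : 0 < q := lt_of_lt_of_le one_pos hq
  have hm : m ≠ 0 := by
    intro h
    subst h
    simp only [Finset.univ_eq_empty, Finset.sum_empty] at hqp
    have h1 : (0:ℝ) < 1 / q := by positivity
    linarith
  set g : Fin m → ℝ → ℝ := fun j => (hf j).1.mk (f j) with hg
  have hgm : ∀ j, Measurable (g j) := fun j => (hf j).1.stronglyMeasurable_mk.measurable
  have heq : ∀ j, f j =ᵐ[muHalf] g j := fun j => (hf j).1.ae_eq_mk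
  have hgf : ∀ j, MemLp (g j) (ENNReal.ofReal (p j)) muHalf := fun j => (hf j).ae_eq (heq j)
  have hpi : ∀ᵐ xs ∂(piHalf m), ∀ j, f j (xs j) = g j (xs j) := by
    rw [ae_all_iff]
    intro j
    have hj : muHalf {t | ¬ f j t = g j t} = 0 := by
      have := heq j
      rwa [Filter.EventuallyEq, ae_iff] at this
    have h2 := Measure.pi_eval_preimage_null (fun _ : Fin m => muHalf) (i := j) hj
    unfold piHalf
    rw [ae_iff]
    have hset : {xs : Fin m → ℝ | ¬ f j (xs j) = g j (xs j)}
        = Function.eval j ⁻¹' {t | ¬ f j t = g j t} := by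
      ext xs; simp [Function.eval]
    rw [hset]
    exact h2
  have hmain := key m hm Q hQmeas hhom p hp hTheta q hq hqp g hgm hgf
  have hxeq : ∀ x : ℝ, (fun xs => Q x xs * ∏ j, g j (xs j))
      =ᵐ[piHalf m] (fun xs => Q x xs * ∏ j, f j (xs j)) := by
    intro x
    filter_upwards [hpi] with xs hxs
    rw [Finset.prod_congr rfl fun j _ => (hxs j).symm]
  constructor
  · filter_upwards [hmain.1] with x hx
    exact hx.congr (hxeq x)
  · have h1 : ∀ x : ℝ, ∫ xs, Q x xs * ∏ j, f j (xs j) ∂(piHalf m)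
        = ∫ xs, Q x xs * ∏ j, g j (xs j) ∂(piHalf m) :=
      fun x => (integral_congr_ae (hxeq x)).symm
    calc eLpNorm (fun x => ∫ xs, Q x xs * ∏ j, f j (xs j) ∂(piHalf m))
          (ENNReal.ofReal q) muHalf
        = eLpNorm (fun x => ∫ xs, Q x xs * ∏ j, g j (xs j) ∂(piHalf m))
          (ENNReal.ofReal q) muHalf := by
          exact eLpNorm_congr_ae (Filter.Eventually.of_forall fun x => h1 x)
      _ ≤ Theta m Q p * ∏ j, eLpNorm (g j) (ENNReal.ofReal (p j)) muHalf := hmain.2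
      _ = Theta m Q p * ∏ j, eLpNorm (f j) (ENNReal.ofReal (p j)) muHalf := by
          congr 1
          exact Finset.prod_congr rfl fun j _ => (eLpNorm_congr_ae (heq j)).symm
end

section
/- Let f be a measurable function on a σ-finite measure space with ‖f‖_{Gψ} = 1, where ψ is a generating function on [a,b). Define h(p) = p ln ψ(p) and its Young–Fenchel transform h*(v) = sup_{p ∈ [a,b)} (pv − p ln ψ(p)). Then the tail function T_f(t) = μ{ω : |f(ω)| ≥ t} satisfies T_f(t) ≤ exp(−h*(ln t)) for all t ≥ e. -/
open MeasureTheory ENNReal Set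

/-- The Grand Lebesgue norm `‖f‖_{Gψ} = sup_{p ∈ [a,b)} ‖f‖_{L^p(μ)}/ψ(p)`. -/
noncomputable def grandNorm {Ω : Type*} [MeasurableSpace Ω] (μ : Measure Ω)
    (a : ℝ) (b : ℝ≥0∞) (ψ : ℝ → ℝ) (f : Ω → ℝ) : ℝ≥0∞ :=
  ⨆ p : {p : ℝ // a ≤ p ∧ (ENNReal.ofReal p) < b},
    eLpNorm f (ENNReal.ofReal p.1) μ / ENNReal.ofReal (ψ p.1)

/-- If `‖f‖_{Gψ} = 1`, then the tail function satisfies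
`μ{|f| ≥ t} ≤ exp(−h*(ln t))` for `t ≥ e`, where
`h*(v) = sup_{p ∈ [a,b)} (pv − p ln ψ(p))` is the Young–Fenchel transform of
`h(p) = p ln ψ(p)`. -/
theorem stmt9 {Ω : Type*} [MeasurableSpace Ω] (μ : Measure Ω) [SigmaFinite μ]
    (a : ℝ) (b : ℝ≥0∞) (ha : 1 ≤ a) (hab : ENNReal.ofReal a < b)
    (ψ : ℝ → ℝ) (hψpos : ∃ c > (0:ℝ), ∀ p, a ≤ p → (ENNReal.ofReal p) < b → c ≤ ψ p)
    (f : Ω → ℝ) (hfm : AEStronglyMeasurable f μ)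
    (hf : grandNorm μ a b ψ f = 1) :
    ∀ t : ℝ, Real.exp 1 ≤ t →
      μ {ω | t ≤ |f ω|} ≤ ENNReal.ofReal
        (Real.exp (-(⨆ p : {p : ℝ // a ≤ p ∧ (ENNReal.ofReal p) < b},
          (p.1 * Real.log t - p.1 * Real.log (ψ p.1))))) := by
  intro t ht
  obtain ⟨c, hc0, hc⟩ := hψpos
  have htpos : (0:ℝ) < t := lt_of_lt_of_le (Real.exp_pos 1) ht
  haveI : Nonempty {p : ℝ // a ≤ p ∧ (ENNReal.ofReal p) < b} := ⟨⟨a, le_refl a, hab⟩⟩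
  set g : {p : ℝ // a ≤ p ∧ (ENNReal.ofReal p) < b} → ℝ :=
    fun p => p.1 * Real.log t - p.1 * Real.log (ψ p.1) with hg
  -- Step 1: per-p Markov bound
  have key : ∀ p : {p : ℝ // a ≤ p ∧ (ENNReal.ofReal p) < b},
      μ {ω | t ≤ |f ω|} ≤ ENNReal.ofReal (Real.exp (-(g p))) := by
    intro p
    have hpa : a ≤ p.1 := p.2.1
    have hp1 : (1:ℝ) ≤ p.1 := ha.trans hpa
    have hppos : (0:ℝ) < p.1 := lt_of_lt_of_le one_pos hp1
    have hψp : (0:ℝ) < ψ p.1 := lt_of_lt_of_le hc0 (hc p.1 hpa p.2.2)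
    -- eLpNorm bound from grandNorm = 1
    have hterm : eLpNorm f (ENNReal.ofReal p.1) μ / ENNReal.ofReal (ψ p.1) ≤ 1 := by
      rw [← hf]
      exact le_iSup (fun q : {p : ℝ // a ≤ p ∧ (ENNReal.ofReal p) < b} =>
        eLpNorm f (ENNReal.ofReal q.1) μ / ENNReal.ofReal (ψ q.1)) p
    have hψ0 : ENNReal.ofReal (ψ p.1) ≠ 0 := by
      simp [ENNReal.ofReal_eq_zero, not_le, hψp]
    have heL : eLpNorm f (ENNReal.ofReal p.1) μ ≤ ENNReal.ofReal (ψ p.1) := by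
      have := (ENNReal.div_le_iff hψ0 ENNReal.ofReal_ne_top).mp hterm
      simpa using this
    have hp0 : ENNReal.ofReal p.1 ≠ 0 := by
      simp [ENNReal.ofReal_eq_zero, not_le, hppos]
    have hset : {ω | t ≤ |f ω|} = {ω | ENNReal.ofReal t ≤ (‖f ω‖₊ : ℝ≥0∞)} := by
      ext ω
      simp only [Set.mem_setOf_eq, ← enorm_eq_nnnorm, Real.enorm_eq_ofReal_abs,
        ENNReal.ofReal_le_ofReal_iff (abs_nonneg _)]
    have hmarkov : μ {ω | ENNReal.ofReal t ≤ (‖f ω‖₊ : ℝ≥0∞)} ≤ (ENNReal.ofReal t)⁻¹ ^ (ENNReal.ofReal p.1).toReal *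
        eLpNorm f (ENNReal.ofReal p.1) μ ^ (ENNReal.ofReal p.1).toReal :=
      meas_ge_le_mul_pow_eLpNorm_enorm μ hp0 ENNReal.ofReal_ne_top hfm
      (ε := ENNReal.ofReal t) (by simp [ENNReal.ofReal_eq_zero, not_le, htpos])
      (fun h => absurd h ENNReal.ofReal_ne_top)
    rw [← hset] at hmarkov
    have htoReal : (ENNReal.ofReal p.1).toReal = p.1 := ENNReal.toReal_ofReal hppos.le
    calc μ {ω | t ≤ |f ω|}
        ≤ (ENNReal.ofReal t)⁻¹ ^ (ENNReal.ofReal p.1).toReal *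
            eLpNorm f (ENNReal.ofReal p.1) μ ^ (ENNReal.ofReal p.1).toReal := hmarkov
      _ ≤ (ENNReal.ofReal t)⁻¹ ^ p.1 * ENNReal.ofReal (ψ p.1) ^ p.1 := by
          rw [htoReal]
          exact mul_le_mul_right (ENNReal.rpow_le_rpow heL hppos.le) _
      _ = ENNReal.ofReal (Real.exp (-(g p))) := by
          rw [ENNReal.inv_rpow, ENNReal.ofReal_rpow_of_pos htpos,
            ENNReal.ofReal_rpow_of_pos hψp, ← ENNReal.div_eq_inv_mul,
            ← ENNReal.ofReal_div_of_pos (Real.rpow_pos_of_pos htpos _)]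
          congr 1
          rw [Real.rpow_def_of_pos hψp, Real.rpow_def_of_pos htpos, ← Real.exp_sub]
          congr 1
          simp only [hg]
          ring
  -- Step 2: optimize over p
  by_cases hμ0 : μ {ω | t ≤ |f ω|} = 0
  · rw [hμ0]; exact zero_le
  have hμtop : μ {ω | t ≤ |f ω|} ≠ ∞ :=
    ne_top_of_le_ne_top ENNReal.ofReal_ne_top (key ⟨a, le_refl a, hab⟩)
  set m : ℝ := (μ {ω | t ≤ |f ω|}).toReal with hm
  have hmpos : 0 < m := ENNReal.toReal_pos hμ0 hμtop
  have hμm : μ {ω | t ≤ |f ω|} = ENNReal.ofReal m := (ENNReal.ofReal_toReal hμtop).symm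
  have hsup : (⨆ p : {p : ℝ // a ≤ p ∧ (ENNReal.ofReal p) < b}, g p) ≤ -Real.log m := by
    apply ciSup_le
    intro p
    have h1 : m ≤ Real.exp (-(g p)) := by
      have := key p
      rw [hμm, ENNReal.ofReal_le_ofReal_iff (Real.exp_pos _).le] at this
      exact this
    have h2 : Real.log m ≤ -(g p) := by
      calc Real.log m ≤ Real.log (Real.exp (-(g p))) :=
            Real.log_le_log hmpos h1
        _ = -(g p) := Real.log_exp _
    linarith
  rw [hμm]
  apply ENNReal.ofReal_le_ofReal
  calc m = Real.exp (Real.log m) := (Real.exp_log hmpos).symm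
    _ ≤ Real.exp (-⨆ p : {p : ℝ // a ≤ p ∧ (ENNReal.ofReal p) < b}, g p) :=
        Real.exp_le_exp.mpr (by linarith)
    _ = _ := rfl
end
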